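/- Fix s ∈ {1,…,β} and γ ∈ [0, 1/4). Assume ρ_in^s + ρ_out^s < 1/2, and assume that for every r ≠ s with T_r ∩ S_s nonempty, |g(S_s ∩ T_r) − μ_r| ≥ (1 − 4γ)·|g(S_s ∩ T_r) − μ_s|. Then |g(S_s) − μ_s| ≤ 2·(1 − ρ_out^s)·|g(S_s ∩ T_s) − μ_s| + (2/(1 − 4γ))·Σ_{r ≠ s, T_r ∩ S_s ≠ ∅} ρ_in^s(r)·|g(S_s ∩ T_r) − μ_r|. -/

import Mathlib

open Finset
open scoped Classical


private lemma aux_diag (a b M ρ : ℝ) (hb : 0 ≤ b) (haM : a ≤ M) (hM : 0 < M)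
    (hρ : ρ < 1/2) : a * b / M ≤ 2 * (1 - ρ) * b := by
  rw [div_le_iff₀ hM]
  nlinarith [mul_le_mul_of_nonneg_right haM hb,
    mul_nonneg (mul_nonneg hb hM.le) (by linarith : (0:ℝ) ≤ 1 - 2*ρ)]

private lemma aux_off (a b c n M e : ℝ) (ha : 0 ≤ a) (hb : 0 ≤ b) (hc : 0 ≤ c)
    (he : 0 < e) (hbc : b * e ≤ c) (hn : 0 < n) (hM : n/2 ≤ M) :
    a * b / M ≤ 2 / e * (a / n * c) := by
  have hM0 : (0:ℝ) < M := lt_of_lt_of_le (by linarith) hM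
  have h1 : a * b / M ≤ a * (c/e) / (n/2) :=
    div_le_div₀ (by positivity) (mul_le_mul_of_nonneg_left ((le_div_iff₀ he).2 hbc) ha)
      (by linarith) hM
  calc a * b / M ≤ a * (c/e) / (n/2) := h1
    _ = 2 / e * (a / n * c) := by
        field_simp

/-- Lemma 12 of the paper: if few points are misclassified and within-cell
empirical means of misclassified cells are closer to their own true mean
(up to factor `1 − 4γ`), then the empirical mean of `S_s` is controlled by the
within-cell deviations. Here `g(A) = (∑_{i∈A} x_i)/|A|`. -/
theorem clustering_mean_decomposition_bound
    (N β : ℕ) (x : Fin N → ℝ) (μ ν : Fin β → ℝ)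
    (T S : Fin β → Finset (Fin N))
    (hTpart : ∀ i : Fin N, ∃! t : Fin β, i ∈ T t)
    (hTne : ∀ t : Fin β, (T t).Nonempty)
    (hSpart : ∀ i : Fin N, ∃! t : Fin β, i ∈ S t)
    (hSnear : ∀ t : Fin β, ∀ i ∈ S t, ∀ r : Fin β, |x i - ν t| ≤ |x i - ν r|)
    (s : Fin β) (γ : ℝ) (hγ0 : 0 ≤ γ) (hγ : γ < 1/4)
    (hρ : (∑ r ∈ Finset.univ.erase s, ((T r ∩ S s).card : ℝ) / ((T s).card : ℝ))
        + (∑ r ∈ Finset.univ.erase s, ((T s ∩ S r).card : ℝ) / ((T s).card : ℝ)) < 1/2)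
    (hcell : ∀ r ∈ Finset.univ.erase s, (T r ∩ S s).Nonempty →
      |(∑ i ∈ S s ∩ T r, x i) / ((S s ∩ T r).card : ℝ) - μ r| ≥
        (1 - 4*γ) * |(∑ i ∈ S s ∩ T r, x i) / ((S s ∩ T r).card : ℝ) - μ s|) :
    |(∑ i ∈ S s, x i) / ((S s).card : ℝ) - μ s| ≤
      2 * (1 - ∑ r ∈ Finset.univ.erase s, ((T s ∩ S r).card : ℝ) / ((T s).card : ℝ)) *
        |(∑ i ∈ S s ∩ T s, x i) / ((S s ∩ T s).card : ℝ) - μ s| +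
      (2 / (1 - 4*γ)) *
        ∑ r ∈ (Finset.univ.erase s).filter (fun r => (T r ∩ S s).Nonempty),
          (((T r ∩ S s).card : ℝ) / ((T s).card : ℝ)) *
            |(∑ i ∈ S s ∩ T r, x i) / ((S s ∩ T r).card : ℝ) - μ r| := by
  classical
  have h14 : (0:ℝ) < 1 - 4*γ := by linarith
  have hnpos : (0:ℝ) < ((T s).card : ℝ) := by exact_mod_cast (hTne s).card_pos
  set n : ℝ := ((T s).card : ℝ) with hn_def
  set ρout : ℝ := ∑ r ∈ Finset.univ.erase s, ((T s ∩ S r).card : ℝ) / n with hρout_def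
  have hρin_nonneg : (0:ℝ) ≤ ∑ r ∈ Finset.univ.erase s, ((T r ∩ S s).card : ℝ) / n :=
    Finset.sum_nonneg fun r _ => by positivity
  have hρout_lt : ρout < 1/2 := by linarith
  -- fiber decompositions
  have hσ : ∀ (A : Finset (Fin N)) (r : Fin β),
      A.filter (fun i => (hSpart i).choose = r) = A ∩ S r := by
    intro A r; ext i
    simp only [Finset.mem_filter, Finset.mem_inter]
    constructor
    · rintro ⟨hi, h⟩; exact ⟨hi, h ▸ (hSpart i).choose_spec.1⟩
    · rintro ⟨hi, h⟩; exact ⟨hi, ((hSpart i).choose_spec.2 r h).symm⟩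
  have hτ : ∀ (A : Finset (Fin N)) (r : Fin β),
      A.filter (fun i => (hTpart i).choose = r) = A ∩ T r := by
    intro A r; ext i
    simp only [Finset.mem_filter, Finset.mem_inter]
    constructor
    · rintro ⟨hi, h⟩; exact ⟨hi, h ▸ (hTpart i).choose_spec.1⟩
    · rintro ⟨hi, h⟩; exact ⟨hi, ((hTpart i).choose_spec.2 r h).symm⟩
  have hcardT : (T s).card = ∑ r : Fin β, (T s ∩ S r).card := by
    rw [Finset.card_eq_sum_card_fiberwise
      (f := fun i => (hSpart i).choose) (t := (Finset.univ : Finset (Fin β)))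
      (fun i _ => Finset.mem_univ _)]
    exact Finset.sum_congr rfl fun r _ => by rw [hσ]
  have hcardS : (S s).card = ∑ r : Fin β, (S s ∩ T r).card := by
    rw [Finset.card_eq_sum_card_fiberwise
      (f := fun i => (hTpart i).choose) (t := (Finset.univ : Finset (Fin β)))
      (fun i _ => Finset.mem_univ _)]
    exact Finset.sum_congr rfl fun r _ => by rw [hτ]
  have hsumS : ∑ i ∈ S s, x i = ∑ r : Fin β, ∑ i ∈ S s ∩ T r, x i := by
    rw [← Finset.sum_fiberwise_of_maps_to
      (g := fun i => (hTpart i).choose) (t := (Finset.univ : Finset (Fin β)))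
      (fun i _ => Finset.mem_univ _) x]
    exact Finset.sum_congr rfl fun r _ => by rw [hτ]
  -- m s = n (1 - ρout)
  have hsum_erase : ((T s ∩ S s).card : ℝ)
      + ∑ r ∈ Finset.univ.erase s, ((T s ∩ S r).card : ℝ) = n := by
    rw [Finset.add_sum_erase Finset.univ (fun r => ((T s ∩ S r).card : ℝ))
      (Finset.mem_univ s), hn_def, hcardT]
    push_cast; ring
  have hρout_eq : ∑ r ∈ Finset.univ.erase s, ((T s ∩ S r).card : ℝ) = n * ρout := by
    rw [hρout_def, ← Finset.sum_div]
    exact (mul_div_cancel₀ _ (ne_of_gt hnpos)).symm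
  have hms : ((S s ∩ T s).card : ℝ) = n * (1 - ρout) := by
    rw [Finset.inter_comm]
    have : ((T s ∩ S s).card : ℝ) = n - n * ρout := by
      rw [hρout_eq] at hsum_erase; linarith
    rw [this]; ring
  set M : ℝ := ((S s).card : ℝ) with hM_def
  have hmsleM : ((S s ∩ T s).card : ℝ) ≤ M := by
    rw [hM_def]
    exact_mod_cast Finset.card_le_card (Finset.inter_subset_left)
  have hMge : n / 2 ≤ M := by nlinarith
  have hMpos : (0:ℝ) < M := lt_of_lt_of_le (by linarith) hMge
  -- sum decomposition with means
  have hx : ∑ i ∈ S s, x i = ∑ r : Fin β, ((S s ∩ T r).card : ℝ) *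
      ((∑ i ∈ S s ∩ T r, x i) / ((S s ∩ T r).card : ℝ)) := by
    rw [hsumS]
    refine Finset.sum_congr rfl fun r _ => ?_
    by_cases h : S s ∩ T r = ∅
    · simp [h]
    · have hc : ((S s ∩ T r).card : ℝ) ≠ 0 := by
        exact_mod_cast Finset.card_ne_zero.2 (Finset.nonempty_of_ne_empty h)
      rw [mul_div_cancel₀ _ hc]
  have hMsum : M = ∑ r : Fin β, ((S s ∩ T r).card : ℝ) := by
    rw [hM_def, hcardS]; push_cast; ring
  have hkey : (∑ i ∈ S s, x i) / M - μ s
      = (∑ r : Fin β, ((S s ∩ T r).card : ℝ) *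
          ((∑ i ∈ S s ∩ T r, x i) / ((S s ∩ T r).card : ℝ) - μ s)) / M := by
    have hexp : ∑ r : Fin β, ((S s ∩ T r).card : ℝ) *
          ((∑ i ∈ S s ∩ T r, x i) / ((S s ∩ T r).card : ℝ) - μ s)
        = (∑ r : Fin β, ((S s ∩ T r).card : ℝ) *
            ((∑ i ∈ S s ∩ T r, x i) / ((S s ∩ T r).card : ℝ))) - M * μ s := by
      rw [hMsum, Finset.sum_mul, ← Finset.sum_sub_distrib]
      exact Finset.sum_congr rfl fun r _ => by ring
    rw [hx, hexp]
    field_simp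
  have habs : |(∑ i ∈ S s, x i) / M - μ s|
      ≤ (∑ r : Fin β, ((S s ∩ T r).card : ℝ) *
          |(∑ i ∈ S s ∩ T r, x i) / ((S s ∩ T r).card : ℝ) - μ s|) / M := by
    rw [hkey, abs_div, abs_of_pos hMpos]
    gcongr
    calc |∑ r : Fin β, ((S s ∩ T r).card : ℝ) *
            ((∑ i ∈ S s ∩ T r, x i) / ((S s ∩ T r).card : ℝ) - μ s)|
        ≤ ∑ r : Fin β, |((S s ∩ T r).card : ℝ) *
            ((∑ i ∈ S s ∩ T r, x i) / ((S s ∩ T r).card : ℝ) - μ s)| :=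
          Finset.abs_sum_le_sum_abs _ _
      _ = ∑ r : Fin β, ((S s ∩ T r).card : ℝ) *
            |(∑ i ∈ S s ∩ T r, x i) / ((S s ∩ T r).card : ℝ) - μ s| := by
          refine Finset.sum_congr rfl fun r _ => ?_
          rw [abs_mul, abs_of_nonneg (by positivity : (0:ℝ) ≤ ((S s ∩ T r).card : ℝ))]
  have hsplit : ∑ r : Fin β, ((S s ∩ T r).card : ℝ) *
        |(∑ i ∈ S s ∩ T r, x i) / ((S s ∩ T r).card : ℝ) - μ s|
      = ((S s ∩ T s).card : ℝ) * |(∑ i ∈ S s ∩ T s, x i) / ((S s ∩ T s).card : ℝ) - μ s|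
        + ∑ r ∈ Finset.univ.erase s, ((S s ∩ T r).card : ℝ) *
            |(∑ i ∈ S s ∩ T r, x i) / ((S s ∩ T r).card : ℝ) - μ s| :=
    (Finset.add_sum_erase Finset.univ _ (Finset.mem_univ s)).symm
  -- bound the diagonal term
  have hterm1 : ((S s ∩ T s).card : ℝ) *
        |(∑ i ∈ S s ∩ T s, x i) / ((S s ∩ T s).card : ℝ) - μ s| / M
      ≤ 2 * (1 - ρout) * |(∑ i ∈ S s ∩ T s, x i) / ((S s ∩ T s).card : ℝ) - μ s| := by
    exact aux_diag _ _ _ _ (abs_nonneg _) hmsleM hMpos hρout_lt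
  -- bound the off-diagonal terms
  have hterm2 : (∑ r ∈ Finset.univ.erase s, ((S s ∩ T r).card : ℝ) *
        |(∑ i ∈ S s ∩ T r, x i) / ((S s ∩ T r).card : ℝ) - μ s|) / M
      ≤ (2 / (1 - 4*γ)) *
        ∑ r ∈ (Finset.univ.erase s).filter (fun r => (T r ∩ S s).Nonempty),
          (((T r ∩ S s).card : ℝ) / n) *
            |(∑ i ∈ S s ∩ T r, x i) / ((S s ∩ T r).card : ℝ) - μ r| := by
    rw [Finset.sum_div, Finset.mul_sum]
    rw [← Finset.sum_filter_of_ne (p := fun r => (T r ∩ S s).Nonempty)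
      (fun r hr hne => ?_)]
    swap
    · by_contra hemp
      have : (S s ∩ T r) = ∅ := by
        rw [Finset.inter_comm]
        exact Finset.not_nonempty_iff_eq_empty.1 hemp
      simp [this] at hne
    refine Finset.sum_le_sum fun r hr => ?_
    obtain ⟨hrs, hrne⟩ := Finset.mem_filter.1 hr
    have hcard_pos : (0:ℝ) < ((S s ∩ T r).card : ℝ) := by
      have : (S s ∩ T r).Nonempty := by rwa [Finset.inter_comm]
      exact_mod_cast this.card_pos
    have hcell' := hcell r hrs hrne
    have hcc : ((T r ∩ S s).card : ℝ) = ((S s ∩ T r).card : ℝ) := by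
      rw [Finset.inter_comm]
    rw [hcc]
    exact aux_off _ _ _ _ _ _ hcard_pos.le (abs_nonneg _) (abs_nonneg _) h14
      (by linarith [hcell']) hnpos hMge
  calc |(∑ i ∈ S s, x i) / M - μ s|
      ≤ (∑ r : Fin β, ((S s ∩ T r).card : ℝ) *
          |(∑ i ∈ S s ∩ T r, x i) / ((S s ∩ T r).card : ℝ) - μ s|) / M := habs
    _ = ((S s ∩ T s).card : ℝ) *
          |(∑ i ∈ S s ∩ T s, x i) / ((S s ∩ T s).card : ℝ) - μ s| / M
        + (∑ r ∈ Finset.univ.erase s, ((S s ∩ T r).card : ℝ) *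
            |(∑ i ∈ S s ∩ T r, x i) / ((S s ∩ T r).card : ℝ) - μ s|) / M := by
        rw [hsplit, add_div]
    _ ≤ 2 * (1 - ρout) * |(∑ i ∈ S s ∩ T s, x i) / ((S s ∩ T s).card : ℝ) - μ s|
        + (2 / (1 - 4*γ)) *
          ∑ r ∈ (Finset.univ.erase s).filter (fun r => (T r ∩ S s).Nonempty),
            (((T r ∩ S s).card : ℝ) / n) *
              |(∑ i ∈ S s ∩ T r, x i) / ((S s ∩ T r).card : ℝ) - μ r| :=
        add_le_add hterm1 hterm2
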